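/- Let π_n = N(x_n, C_n) be a Gaussian measure on ℝ^d with mean x_n ∈ ℝ^d and symmetric positive definite covariance C_n ∈ ℝ^{d×d}, and let P_n(x) = N(x, s²C_n) with s > 0 be the Hessian-based Gaussian random walk proposal. Then the π_n-reversible Metropolis–Hastings transition kernel K_n with proposal P_n satisfies K_n = (T_n)_*K with T_n(x) := x_n + C_n^{1/2} x, where K is the Metropolis–Hastings transition kernel targeting the standard Gaussian π = N(0, I_d) with proposal kernel P(x) = N(x, s² I_d). -/

import Mathlib

open MeasureTheory ProbabilityTheory Matrix
open scoped ENNReal NNReal MatrixOrder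

/-- The standard Gaussian measure `N(0, I_d)` on `ℝ^d`. -/
noncomputable def stdGaussian (d : ℕ) : Measure (Fin d → ℝ) :=
  Measure.pi fun _ => gaussianReal 0 1

instance (d : ℕ) : IsProbabilityMeasure (stdGaussian d) := by
  unfold _root_.stdGaussian; infer_instance

/-- The Gaussian measure `N(m, C)` on `ℝ^d`, realized as the pushforward of the standard
Gaussian under `x ↦ m + C^{1/2} x` for positive semidefinite `C` (junk value otherwise). -/
noncomputable def gaussian {d : ℕ} (m : Fin d → ℝ) (C : Matrix (Fin d) (Fin d) ℝ) :
    Measure (Fin d → ℝ) :=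
  letI := Classical.propDecidable C.PosSemidef
  if hC : C.PosSemidef then (_root_.stdGaussian d).map (fun x => m + CFC.sqrt C *ᵥ x)
  else Measure.dirac m

instance {d : ℕ} (m : Fin d → ℝ) (C : Matrix (Fin d) (Fin d) ℝ) :
    IsProbabilityMeasure (gaussian m C) := by
  unfold gaussian
  split
  · exact Measure.isProbabilityMeasure_map
      ((continuous_const.add ((continuous_const.matrix_mulVec continuous_id))).measurable.aemeasurable)
  · infer_instance

/-- The random-walk transition kernel: `P(x, ·)` is the law of `x + ξ` with `ξ ∼ μ`. -/
noncomputable def rwKernel {d : ℕ} (μ : Measure (Fin d → ℝ)) :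
    Kernel (Fin d → ℝ) (Fin d → ℝ) :=
  Kernel.map (Kernel.id ×ₖ Kernel.const _ μ) (fun p => p.1 + p.2)

instance {d : ℕ} (μ : Measure (Fin d → ℝ)) [IsProbabilityMeasure μ] :
    IsMarkovKernel (rwKernel μ) :=
  Kernel.IsMarkovKernel.map _ (measurable_fst.add measurable_snd)

/-- The Metropolis–Hastings acceptance probability `α_P(x, x') := min{1, dν_P^⊤/dν_P (x, x')}`,
where `ν_P(dx dx') := P(x, dx') π(dx)` and `ν_P^⊤` is its swap. -/
noncomputable def mhAccept {E : Type*} [MeasurableSpace E] (π : Measure E) (P : Kernel E E) :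
    E × E → ℝ≥0∞ :=
  fun p => min 1 (((π ⊗ₘ P).map Prod.swap).rnDeriv (π ⊗ₘ P) p)

/-- The Metropolis–Hastings transition kernel with target `π` and proposal `P`:
`K(x, dx') = α_P(x, x') P(x, dx') + r(x) δ_x(dx')`. -/
noncomputable def mhKernel {E : Type*} [MeasurableSpace E] (π : Measure E) (P : Kernel E E)
    [IsSFiniteKernel P] : Kernel E E :=
  P.withDensity (fun x y => mhAccept π P (x, y)) +
    (Kernel.id).withDensity (fun x _ => ∫⁻ y, (1 - mhAccept π P (x, y)) ∂(P x))

section Aux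

open Filter Function

namespace MHAux

lemma posSemidef_smul {n : Type*} [Fintype n] {A : Matrix n n ℝ} (hA : A.PosSemidef)
    {s : ℝ} (hs : 0 ≤ s) : (s • A).PosSemidef := by
  exact hA.smul hs

lemma sqrt_smul {n : Type*} [Fintype n] [DecidableEq n] {A : Matrix n n ℝ}
    (hA : A.PosSemidef) {s : ℝ} (hs : 0 ≤ s) (h : (s ^ 2 • A).PosSemidef) :
    CFC.sqrt (s ^ 2 • A) = s • CFC.sqrt A :=
  (CFC.sqrt_eq_iff _ _ h.nonneg (posSemidef_smul (CFC.sqrt_nonneg A).posSemidef hs).nonneg).mpr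
    (by rw [smul_mul_smul_comm, ← pow_two, ← pow_two, CFC.sq_sqrt A hA.nonneg])

lemma sqrt_one {n : Type*} [Fintype n] [DecidableEq n]
    (h : (1 : Matrix n n ℝ).PosSemidef) : CFC.sqrt (1 : Matrix n n ℝ) = 1 :=
  CFC.sqrt_one

/-- The affine measurable equivalence `x ↦ xn + A x` for invertible `A`. -/
noncomputable def affEquiv {d : ℕ} (xn : Fin d → ℝ) (A : Matrix (Fin d) (Fin d) ℝ)
    (hA : IsUnit A.det) : (Fin d → ℝ) ≃ᵐ (Fin d → ℝ) where
  toFun x := xn + A *ᵥ x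
  invFun y := A⁻¹ *ᵥ (y - xn)
  left_inv x := by
    simp only [add_sub_cancel_left, Matrix.mulVec_mulVec, Matrix.nonsing_inv_mul A hA,
      Matrix.one_mulVec]
  right_inv y := by
    simp only [Matrix.mulVec_mulVec, Matrix.mul_nonsing_inv A hA, Matrix.one_mulVec,
      add_sub_cancel]
  measurable_toFun :=
    (continuous_const.add (continuous_const.matrix_mulVec continuous_id)).measurable
  measurable_invFun :=
    (continuous_const.matrix_mulVec (continuous_id.sub continuous_const)).measurable

lemma rwKernel_apply {d : ℕ} (μ : Measure (Fin d → ℝ)) [SFinite μ] (x : Fin d → ℝ) :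
    rwKernel μ x = μ.map (fun v => x + v) := by
  rw [rwKernel, Kernel.map_apply _ (f := fun p : (Fin d → ℝ) × (Fin d → ℝ) => p.1 + p.2) (measurable_fst.add measurable_snd),
    Kernel.prod_apply, Kernel.id_apply, Kernel.const_apply, Measure.dirac_prod,
    Measure.map_map (g := fun p : (Fin d → ℝ) × (Fin d → ℝ) => p.1 + p.2) (measurable_fst.add measurable_snd) measurable_prodMk_left]
  rfl

lemma withDensity_map_equiv {E F : Type*} [MeasurableSpace E] [MeasurableSpace F]
    (e : E ≃ᵐ F) (μ : Measure E) {f : F → ℝ≥0∞} (hf : Measurable f) :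
    (μ.map e).withDensity f = (μ.withDensity (f ∘ e)).map e := by
  ext s hs
  rw [withDensity_apply _ hs, Measure.map_apply e.measurable hs,
    withDensity_apply _ (e.measurable hs), setLIntegral_map hs hf e.measurable]
  rfl

lemma compProd_map_equiv {E : Type*} [MeasurableSpace E] (e : E ≃ᵐ E)
    (π : Measure E) [SFinite π] (κ η : Kernel E E) [IsSFiniteKernel κ] [IsSFiniteKernel η]
    (h : ∀ x, η (e x) = (κ x).map e) :
    (π.map e) ⊗ₘ η = (π ⊗ₘ κ).map (Prod.map e e) := by
  ext s hs
  rw [Measure.compProd_apply hs, Measure.map_apply (e.measurable.prodMap e.measurable) hs,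
    Measure.compProd_apply ((e.measurable.prodMap e.measurable) hs),
    lintegral_map (Kernel.measurable_kernel_prodMk_left hs) e.measurable]
  refine lintegral_congr fun x => ?_
  rw [h x, Measure.map_apply e.measurable (measurable_prodMk_left hs)]
  congr 1

lemma measurable_mhAccept {E : Type*} [MeasurableSpace E] (π : Measure E) (P : Kernel E E) :
    Measurable (mhAccept π P) :=
  measurable_const.min (Measure.measurable_rnDeriv _ _)

end MHAux

end Aux

/-- For the Gaussian target `π_n = N(x_n, C_n)` and the Hessian-based Gaussian
random walk proposal `P_n(x) = N(x, s²C_n)`, the `π_n`-reversible MH kernel `K_n` is the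
pushforward `(T_n)_*K` of the MH kernel `K` targeting `N(0, I_d)` with proposal `N(x, s²I_d)`
under the bijection `T_n(x) = x_n + C_n^{1/2} x`, i.e. (a.e.) `K_n(y, ·) = K(T_n⁻¹ y, T_n⁻¹ ·)`. -/
theorem mhKernel_gaussian_rw_pushforward
    {d : ℕ} (xn : Fin d → ℝ) (C : Matrix (Fin d) (Fin d) ℝ) (hC : C.PosDef)
    (s : ℝ) (hs : 0 < s) :
    ∀ᵐ y ∂(gaussian xn C),
      mhKernel (gaussian xn C) (rwKernel (gaussian 0 (s ^ 2 • C))) y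
        = (mhKernel (gaussian 0 1)
              (rwKernel (gaussian 0 (s ^ 2 • (1 : Matrix (Fin d) (Fin d) ℝ))))
            ((CFC.sqrt C)⁻¹ *ᵥ (y - xn))).map
            (fun x => xn + CFC.sqrt C *ᵥ x) := by
  classical
  set A := CFC.sqrt C with hAdef
  have hdet : IsUnit A.det := by
    have h1 : C.det = A.det ^ 2 := by
      conv_lhs => rw [← CFC.sq_sqrt C hC.posSemidef.nonneg]
      rw [Matrix.det_pow]
    refine isUnit_iff_ne_zero.mpr fun h0 => ?_
    have h2 := hC.det_pos
    rw [h1, h0] at h2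
    simp at h2
  set e := MHAux.affEquiv xn A hdet with he
  have hcoe : ⇑e = fun x => xn + A *ᵥ x := rfl
  -- identifications of Gaussian measures
  have hsmC : (s ^ 2 • C).PosSemidef := MHAux.posSemidef_smul hC.posSemidef (sq_nonneg s)
  have hsm1 : (s ^ 2 • (1 : Matrix (Fin d) (Fin d) ℝ)).PosSemidef :=
    MHAux.posSemidef_smul Matrix.PosSemidef.one (sq_nonneg s)
  have hg1 : gaussian (0 : Fin d → ℝ) 1 = stdGaussian d := by
    rw [gaussian, dif_pos Matrix.PosSemidef.one]
    simp [MHAux.sqrt_one Matrix.PosSemidef.one, Matrix.one_mulVec]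
  have hπn : gaussian xn C = (stdGaussian d).map e := by
    rw [gaussian, dif_pos hC.posSemidef, hcoe]
  have hπmap : gaussian xn C = (gaussian (0 : Fin d → ℝ) 1).map e := by rw [hπn, hg1]
  have hμ0 : gaussian (0 : Fin d → ℝ) (s ^ 2 • (1 : Matrix (Fin d) (Fin d) ℝ))
      = (stdGaussian d).map (fun x => s • x) := by
    rw [gaussian, dif_pos hsm1]
    congr 1
    funext x
    rw [MHAux.sqrt_smul Matrix.PosSemidef.one hs.le hsm1,
      MHAux.sqrt_one Matrix.PosSemidef.one]
    simp [Matrix.smul_mulVec, Matrix.one_mulVec]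
  have hmA : Measurable fun v : Fin d → ℝ => A *ᵥ v :=
    (continuous_const.matrix_mulVec continuous_id).measurable
  have hms : Measurable fun v : Fin d → ℝ => s • v :=
    (continuous_id.const_smul s).measurable
  have hμn : gaussian (0 : Fin d → ℝ) (s ^ 2 • C)
      = (gaussian (0 : Fin d → ℝ) (s ^ 2 • (1 : Matrix (Fin d) (Fin d) ℝ))).map
          (fun v => A *ᵥ v) := by
    rw [gaussian, dif_pos hsmC, hμ0, Measure.map_map hmA hms]
    congr 1
    funext x
    rw [MHAux.sqrt_smul hC.posSemidef hs.le hsmC]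
    simp [Function.comp, Matrix.smul_mulVec, Matrix.mulVec_smul]
    exact rfl
  set P := rwKernel (gaussian (0 : Fin d → ℝ)
    (s ^ 2 • (1 : Matrix (Fin d) (Fin d) ℝ))) with hPdef
  set Pn := rwKernel (gaussian (0 : Fin d → ℝ) (s ^ 2 • C)) with hPndef
  set π0 := gaussian (0 : Fin d → ℝ) 1 with hπ0def
  have hP : ∀ x, Pn (e x) = (P x).map e := by
    intro x
    have hm1 : Measurable fun v : Fin d → ℝ => e x + v := measurable_const.add measurable_id
    have hm2 : Measurable fun v : Fin d → ℝ => x + v := measurable_const.add measurable_id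
    rw [hPndef, hPdef, MHAux.rwKernel_apply, MHAux.rwKernel_apply, hμn,
      Measure.map_map hm1 hmA, Measure.map_map e.measurable hm2]
    congr 1
    funext v
    show e x + A *ᵥ v = e (x + v)
    rw [hcoe]
    simp [Matrix.mulVec_add, add_assoc]
  have hν : (gaussian xn C) ⊗ₘ Pn = (π0 ⊗ₘ P).map (Prod.map e e) := by
    rw [hπmap]
    exact MHAux.compProd_map_equiv e π0 P Pn hP
  have hνswap : ((gaussian xn C) ⊗ₘ Pn).map Prod.swap
      = ((π0 ⊗ₘ P).map Prod.swap).map (Prod.map e e) := by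
    rw [hν, Measure.map_map measurable_swap (e.measurable.prodMap e.measurable),
      Measure.map_map (e.measurable.prodMap e.measurable) measurable_swap]
    congr 1
  set ν := π0 ⊗ₘ P with hνdef
  have hmapswap : IsProbabilityMeasure (ν.map Prod.swap) :=
    Measure.isProbabilityMeasure_map measurable_swap.aemeasurable
  have heequiv : ⇑(e.prodCongr e) = Prod.map ⇑e ⇑e := rfl
  have hrn := (e.prodCongr e).measurableEmbedding.rnDeriv_map (ν.map Prod.swap) ν
  have hacc : ∀ᵐ p ∂ν, mhAccept (gaussian xn C) Pn (Prod.map e e p) = mhAccept π0 P p := by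
    filter_upwards [hrn] with p hp
    simp only [mhAccept]
    rw [hνswap, hν, ← heequiv]
    exact congrArg (min 1) hp
  have h2 : ∀ᵐ x ∂π0, ∀ᵐ y ∂(P x),
      mhAccept (gaussian xn C) Pn (e x, e y) = mhAccept π0 P (x, y) :=
    Measure.ae_ae_of_ae_compProd hacc
  have hae : ae (gaussian xn C) = Filter.map e (ae π0) := by
    rw [hπmap, ← MeasurableEquiv.map_ae]
  rw [hae, Filter.eventually_map]
  filter_upwards [h2] with x hx
  have hxinv : A⁻¹ *ᵥ (e x - xn) = x := e.symm_apply_apply x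
  rw [hxinv, ← hcoe]
  -- measurability facts
  have hmeas_acc_n : Measurable (Function.uncurry
      fun a b => mhAccept (gaussian xn C) Pn (a, b)) := MHAux.measurable_mhAccept _ _
  have hmeas_acc : Measurable (Function.uncurry
      fun a b => mhAccept π0 P (a, b)) := MHAux.measurable_mhAccept _ _
  have hmeas_rn : Measurable (Function.uncurry fun (a : Fin d → ℝ) (_ : Fin d → ℝ) =>
      ∫⁻ y, (1 - mhAccept (gaussian xn C) Pn (a, y)) ∂(Pn a)) :=
    (Measurable.lintegral_kernel_prod_right' (κ := Pn)
      (f := fun q => 1 - mhAccept (gaussian xn C) Pn q)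
      (measurable_const.sub (MHAux.measurable_mhAccept _ _))).comp measurable_fst
  have hmeas_rn0 : Measurable (Function.uncurry fun (a : Fin d → ℝ) (_ : Fin d → ℝ) =>
      ∫⁻ y, (1 - mhAccept π0 P (a, y)) ∂(P a)) :=
    (Measurable.lintegral_kernel_prod_right' (κ := P)
      (f := fun q => 1 - mhAccept π0 P q)
      (measurable_const.sub (MHAux.measurable_mhAccept _ _))).comp measurable_fst
  simp only [mhKernel]
  rw [Kernel.add_apply, Kernel.add_apply,
    Kernel.withDensity_apply _ hmeas_acc_n, Kernel.withDensity_apply _ hmeas_acc,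
    Kernel.withDensity_apply _ hmeas_rn, Kernel.withDensity_apply _ hmeas_rn0,
    Kernel.id_apply, Kernel.id_apply, withDensity_const, withDensity_const,
    Measure.map_add _ _ e.measurable, Measure.map_smul, Measure.map_dirac' e.measurable]
  have hc : (∫⁻ y, (1 - mhAccept (gaussian xn C) Pn ((e x), y)) ∂(Pn (e x)))
      = ∫⁻ y, (1 - mhAccept π0 P (x, y)) ∂(P x) := by
    have hmf : Measurable fun y : Fin d → ℝ => 1 - mhAccept (gaussian xn C) Pn (e x, y) :=
      measurable_const.sub ((MHAux.measurable_mhAccept _ _).comp measurable_prodMk_left)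
    rw [hP x, lintegral_map hmf e.measurable]
    exact lintegral_congr_ae (hx.mono fun y hy => by simp only [hy])
  have hmg : Measurable fun y : Fin d → ℝ => mhAccept (gaussian xn C) Pn (e x, y) :=
    (MHAux.measurable_mhAccept _ _).comp measurable_prodMk_left
  rw [hc, hP x, MHAux.withDensity_map_equiv e (P x) hmg]
  congr 1
  · congr 1
    exact withDensity_congr_ae (hx.mono fun y hy => hy)
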